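/- Let M ⊂ ℝⁿ be a C² submanifold with positive reach τ > 0, and let x ∈ M. For any point y ∈ M with ‖y − x‖ < τ, the distance from y to the tangent space T_x M satisfies d(y, T_x M) ≤ ‖y − x‖² / (2τ). -/

import Mathlib

set_option maxHeartbeats 1000000
set_option linter.unusedVariables false


/-- `M` has reach at least `τ`: every point of the ambient space whose distance to `M`
is less than `τ` has a unique nearest point on `M` (Federer, 1959). -/
def HasReachGE {n : ℕ} (M : Set (EuclideanSpace ℝ (Fin n))) (τ : ℝ) : Prop :=
  ∀ y : EuclideanSpace ℝ (Fin n), Metric.infDist y M < τ →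
    ∃! p, p ∈ M ∧ dist y p = Metric.infDist y M

open Metric Filter Topology Set

private lemma federer_scalar_contra {d e h D : ℝ} (h0 : 0 < d) (he : 0 < e) (he1 : e ≤ 1)
    (hh : 0 < h) (key1 : d^2 + 2*(h*(d - e*d/2)) + h^2 ≤ D)
    (hlt2 : D < (d + (1-e)*h)^2) : False := by
  nlinarith [mul_pos (mul_pos he h0) hh,
    mul_nonneg (mul_nonneg he.le (by linarith : (0:ℝ) ≤ 2 - e)) (mul_nonneg hh.le hh.le)]

lemma federer_forward_step {n : ℕ} {M : Set (EuclideanSpace ℝ (Fin n))} (hM : IsClosed M)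
    (hne : M.Nonempty) {τ : ℝ} (hreach : HasReachGE M τ)
    (z : EuclideanSpace ℝ (Fin n)) (h0 : 0 < Metric.infDist z M)
    (hτ : Metric.infDist z M < τ) {ε : ℝ} (hε : 0 < ε) (hε1 : ε ≤ 1) :
    ∃ h₀ > 0, ∀ h : ℝ, 0 < h → h ≤ h₀ →
      ∃ z', dist z' z ≤ h ∧ Metric.infDist z M + (1 - ε) * h ≤ Metric.infDist z' M := by
  by_contra hcon
  push_neg at hcon
  obtain ⟨p, hpM, hp⟩ := hM.exists_infDist_eq_dist hne z
  set δ := Metric.infDist z M with hδ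
  have hzp : ‖z - p‖ = δ := by rw [← dist_eq_norm]; exact hp.symm
  have hzp0 : ‖z - p‖ ≠ 0 := by rw [hzp]; exact ne_of_gt h0
  set u := ‖z - p‖⁻¹ • (z - p) with hu_def
  have hu : ‖u‖ = 1 := by
    rw [hu_def, norm_smul, norm_inv, norm_norm, inv_mul_cancel₀ hzp0]
  have hsel : ∀ k : ℕ, ∃ h : ℝ, 0 < h ∧ h ≤ 1/(k+1) ∧
      Metric.infDist (z + h • u) M < δ + (1-ε)*h := by
    intro k
    obtain ⟨h, hh0, hh1, hbad⟩ := hcon (1/(k+1)) (by positivity)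
    refine ⟨h, hh0, hh1, hbad (z + h • u) ?_⟩
    rw [dist_eq_norm, add_sub_cancel_left, norm_smul, hu, mul_one, Real.norm_eq_abs,
      abs_of_pos hh0]
  choose hs hspos hssmall hsbad using hsel
  have hq : ∀ k : ℕ, ∃ q ∈ M, Metric.infDist (z + hs k • u) M = dist (z + hs k • u) q :=
    fun k => hM.exists_infDist_eq_dist hne _
  choose q hqM hq_eq using hq
  have hdistq : ∀ k : ℕ, dist (z + hs k • u) (q k) < δ + (1-ε) * hs k := by
    intro k; rw [← hq_eq]; exact hsbad k
  have hdzu : ∀ k : ℕ, dist z (z + hs k • u) = hs k := by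
    intro k
    rw [dist_comm, dist_eq_norm, add_sub_cancel_left, norm_smul, hu, mul_one,
      Real.norm_eq_abs, abs_of_pos (hspos k)]
  have hdistzq : ∀ k : ℕ, dist z (q k) ≤ δ + 2 * (1/(k+1)) := by
    intro k
    have h1 := hdistq k
    have h2 := dist_triangle z (z + hs k • u) (q k)
    have h3 := hdzu k
    have h4 := hssmall k
    have h5 := hspos k
    nlinarith [hε, hε1]
  have hqball : ∀ k : ℕ, q k ∈ closedBall z (δ + 2) := by
    intro k
    have h6 : 1/((k:ℝ)+1) ≤ 1 := by
      rw [div_le_one (by positivity)]; linarith [Nat.cast_nonneg (α := ℝ) k]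
    have := hdistzq k
    rw [mem_closedBall, dist_comm]
    linarith
  obtain ⟨q', hq'ball, φ, hφ, hq'lim⟩ := (isCompact_closedBall z (δ+2)).tendsto_subseq hqball
  have hq'M : q' ∈ M := hM.mem_of_tendsto hq'lim (Eventually.of_forall (fun k => hqM _))
  have hzq' : dist z q' ≤ δ := by
    have hlim1 : Tendsto (fun k => dist z (q (φ k))) atTop (𝓝 (dist z q')) :=
      tendsto_const_nhds.dist hq'lim
    have hlim2 : Tendsto (fun k : ℕ => δ + 2 * (1/((φ k : ℝ)+1))) atTop (𝓝 (δ + 2 * 0)) := by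
      refine tendsto_const_nhds.add (Tendsto.const_mul 2 ?_)
      exact tendsto_one_div_add_atTop_nhds_zero_nat.comp hφ.tendsto_atTop
    have := le_of_tendsto_of_tendsto' hlim1 hlim2 (fun k => hdistzq (φ k))
    simpa using this
  have hq'near : dist z q' = δ := le_antisymm hzq' (infDist_le_dist_of_mem hq'M)
  obtain ⟨P, hP, hPuniq⟩ := hreach z hτ
  have hpP : p = P := hPuniq p ⟨hpM, hp.symm⟩
  have hq'P : q' = P := hPuniq q' ⟨hq'M, hq'near⟩
  have hq'p : q' = p := by rw [hq'P, hpP]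
  rw [hq'p] at hq'lim
  have hεδ : 0 < ε * δ / 2 := by positivity
  obtain ⟨K, hK⟩ := (Metric.tendsto_atTop.mp hq'lim) (ε*δ/2) hεδ
  set j := φ K with hj
  have hm : dist (q j) p < ε * δ / 2 := hK K le_rfl
  set h := hs j with hh
  set qq := q j with hqq
  have hj0 : 0 < h := hspos j
  have e1 : dist (z + h • u) qq ^ 2
      = ‖z - qq‖^2 + 2*(h * inner ℝ (z - qq) u) + h^2 := by
    rw [dist_eq_norm]
    have e0 : z + h • u - qq = (z - qq) + h • u := by abel
    rw [e0, norm_add_sq_real, real_inner_smul_right, norm_smul, hu, mul_one,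
      Real.norm_eq_abs, abs_of_pos hj0]
  have e2 : (inner ℝ (z - qq) u : ℝ) = inner ℝ (z - p) u + inner ℝ (p - qq) u := by
    rw [show z - qq = (z - p) + (p - qq) by abel, inner_add_left]
  have e3 : (inner ℝ (z - p) u : ℝ) = δ := by
    rw [hu_def, real_inner_smul_right, real_inner_self_eq_norm_sq, hzp]
    field_simp
  have e4 : -(ε*δ/2) ≤ (inner ℝ (p - qq) u : ℝ) := by
    have h7 := real_inner_le_norm (qq - p) u
    have h8 : (inner ℝ (p - qq) u : ℝ) = - inner ℝ (qq - p) u := by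
      rw [← inner_neg_left]; congr 1; abel
    have h9 : ‖qq - p‖ = dist (q j) p := by rw [dist_eq_norm]
    rw [h8]
    rw [hu] at h7
    nlinarith [hm]
  have e5 : δ ≤ ‖z - qq‖ := by
    rw [← dist_eq_norm]
    exact infDist_le_dist_of_mem (hqM j)
  have hlt := hdistq j
  have hdn : (0:ℝ) ≤ dist (z + h • u) qq := dist_nonneg
  have he5' : δ^2 ≤ ‖z - qq‖^2 := pow_le_pow_left₀ h0.le e5 2
  have hlt2 : dist (z + h • u) qq ^2 < (δ + (1-ε)*h)^2 := pow_lt_pow_left₀ hlt hdn two_ne_zero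
  have e6 : δ - ε*δ/2 ≤ (inner ℝ (z - qq) u : ℝ) := by rw [e2, e3]; linarith
  have e7 : h * (δ - ε*δ/2) ≤ h * inner ℝ (z - qq) u :=
    mul_le_mul_of_nonneg_left e6 hj0.le
  have key1 : δ^2 + 2*(h*(δ - ε*δ/2)) + h^2 ≤ dist (z + h • u) qq ^ 2 := by
    rw [e1]; linarith
  exact federer_scalar_contra h0 hε hε1 hj0 key1 hlt2

lemma federer_escape {n : ℕ} {M : Set (EuclideanSpace ℝ (Fin n))} (hM : IsClosed M)
    (hne : M.Nonempty) {τ : ℝ} (hreach : HasReachGE M τ)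
    (z₀ : EuclideanSpace ℝ (Fin n)) (hd₀ : 0 < Metric.infDist z₀ M) {Lmax : ℝ}
    (hLpos : 0 ≤ Lmax) (hsum : Metric.infDist z₀ M + Lmax < τ) :
    ∃ z, dist z z₀ ≤ Lmax ∧ Metric.infDist z₀ M + Lmax ≤ Metric.infDist z M := by
  set d₀ := Metric.infDist z₀ M with hd₀def
  have main : ∀ ε : ℝ, 0 < ε → ε ≤ 1 →
      ∃ z, dist z z₀ ≤ Lmax ∧ d₀ + (1-ε) * Lmax ≤ Metric.infDist z M := by
    intro ε hε hε1
    set A : Set ℝ := {L | L ∈ Icc 0 Lmax ∧ ∀ L' ∈ Icc (0:ℝ) L,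
      ∃ z, dist z z₀ ≤ L' ∧ d₀ + (1-ε) * L' ≤ Metric.infDist z M} with hA
    have h0A : (0:ℝ) ∈ A := by
      refine ⟨⟨le_refl 0, hLpos⟩, ?_⟩
      intro L' hL'
      have hL0 : L' = 0 := le_antisymm hL'.2 hL'.1
      subst hL0
      exact ⟨z₀, by simp, by simp [hd₀def]⟩
    have hAbdd : BddAbove A := ⟨Lmax, fun a ha => ha.1.2⟩
    have hAne : A.Nonempty := ⟨0, h0A⟩
    set c := sSup A with hc
    have hc0 : 0 ≤ c := le_csSup hAbdd h0A
    have hcmax : c ≤ Lmax := csSup_le hAne (fun a ha => ha.1.2)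
    have hPlt : ∀ L' : ℝ, 0 ≤ L' → L' < c →
        ∃ z, dist z z₀ ≤ L' ∧ d₀ + (1-ε)*L' ≤ Metric.infDist z M := by
      intro L' hL'0 hL'c
      obtain ⟨a, haA, hLa⟩ := exists_lt_of_lt_csSup hAne hL'c
      exact haA.2 L' ⟨hL'0, hLa.le⟩
    obtain ⟨zc, hzc_ball, hzc_max⟩ := (isCompact_closedBall z₀ c).exists_isMaxOn
      ⟨z₀, mem_closedBall_self hc0⟩ ((continuous_infDist_pt M).continuousOn)
    have hzc_val : d₀ + (1-ε)*c ≤ Metric.infDist zc M := by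
      refine le_of_forall_pos_le_add ?_
      intro δ hδ
      rcases eq_or_lt_of_le hc0 with hc0' | hc0'
      · have h1 : Metric.infDist z₀ M ≤ Metric.infDist zc M :=
          hzc_max (mem_closedBall_self hc0)
        rw [← hc0']
        simp only [mul_zero]
        linarith
      · set L' := max 0 (c - δ) with hL'def
        have hL'0 : 0 ≤ L' := le_max_left _ _
        have hL'c : L' < c := by
          rw [hL'def, max_lt_iff]
          exact ⟨hc0', by linarith⟩
        obtain ⟨z, hz1, hz2⟩ := hPlt L' hL'0 hL'c
        have hzball : z ∈ closedBall z₀ c := mem_closedBall.2 (hz1.trans hL'c.le)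
        have h3 : Metric.infDist z M ≤ Metric.infDist zc M := hzc_max hzball
        have h4 : c - L' ≤ δ := by
          rw [hL'def]
          rcases le_total 0 (c - δ) with h | h
          · rw [max_eq_right h]; linarith
          · rw [max_eq_left h]; linarith
        have h5 : (1-ε)*c - (1-ε)*L' ≤ δ := by nlinarith
        linarith
    have hcA : c ∈ A := by
      refine ⟨⟨hc0, hcmax⟩, ?_⟩
      intro L' hL'
      rcases lt_or_eq_of_le hL'.2 with h | h
      · exact hPlt L' hL'.1 h
      · subst h
        exact ⟨zc, mem_closedBall.1 hzc_ball, hzc_val⟩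
    have hceq : c = Lmax := by
      by_contra hne'
      have hclt : c < Lmax := lt_of_le_of_ne hcmax hne'
      have hzcpos : 0 < Metric.infDist zc M := by
        have : 0 ≤ (1-ε)*c := mul_nonneg (by linarith) hc0
        linarith [hzc_val]
      have hzcτ : Metric.infDist zc M < τ := by
        have h1 : Metric.infDist zc M ≤ d₀ + dist zc z₀ := infDist_le_infDist_add_dist
        have h2 := mem_closedBall.1 hzc_ball
        linarith
      obtain ⟨h₀, hh₀, hstep⟩ := federer_forward_step hM hne hreach zc hzcpos hzcτ hε hε1
      set h := min h₀ (Lmax - c) with hh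
      have hhpos : 0 < h := lt_min hh₀ (by linarith)
      have hchA : c + h ∈ A := by
        refine ⟨⟨by linarith, by linarith [min_le_right h₀ (Lmax - c)]⟩, ?_⟩
        intro L' hL'
        rcases le_or_gt L' c with hLc | hLc
        · exact hcA.2 L' ⟨hL'.1, hLc⟩
        · obtain ⟨z', hz'1, hz'2⟩ := hstep (L' - c) (by linarith)
            (le_trans (by linarith [hL'.2]) (min_le_left h₀ (Lmax - c)))
          refine ⟨z', ?_, ?_⟩
          · calc dist z' z₀ ≤ dist z' zc + dist zc z₀ := dist_triangle _ _ _
              _ ≤ (L' - c) + c := add_le_add hz'1 (mem_closedBall.1 hzc_ball)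
              _ = L' := by ring
          · have hexp : (1-ε)*L' = (1-ε)*c + (1-ε)*(L'-c) := by ring
            linarith [hzc_val, hz'2]
      have := le_csSup hAbdd hchA
      linarith
    exact ⟨zc, by rw [← hceq]; exact mem_closedBall.1 hzc_ball, by rw [← hceq]; exact hzc_val⟩
  obtain ⟨Z, hZball, hZmax⟩ := (isCompact_closedBall z₀ Lmax).exists_isMaxOn
    ⟨z₀, mem_closedBall_self hLpos⟩ ((continuous_infDist_pt M).continuousOn)
  refine ⟨Z, mem_closedBall.1 hZball, ?_⟩
  refine le_of_forall_pos_le_add ?_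
  intro δ hδ
  set ε := min (1:ℝ) (δ / (Lmax + 1)) with hεdef
  have hε : 0 < ε := lt_min one_pos (by positivity)
  have hε1 : ε ≤ 1 := min_le_left _ _
  obtain ⟨z, hz1, hz2⟩ := main ε hε hε1
  have h3 : Metric.infDist z M ≤ Metric.infDist Z M := hZmax (mem_closedBall.2 hz1)
  have h4 : ε * Lmax ≤ δ := by
    have h5 : ε ≤ δ/(Lmax+1) := min_le_right _ _
    have h6 : ε * Lmax ≤ (δ/(Lmax+1)) * Lmax := mul_le_mul_of_nonneg_right h5 hLpos
    have h7 : (δ/(Lmax+1)) * Lmax ≤ δ := by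
      rw [div_mul_eq_mul_div, div_le_iff₀ (by linarith)]
      nlinarith
    linarith
  nlinarith [hz2, h3]

lemma federer_tangent_step {n : ℕ} {M : Set (EuclideanSpace ℝ (Fin n))} (hM : IsClosed M)
    (x : EuclideanSpace ℝ (Fin n)) (hx : x ∈ M) (ν : EuclideanSpace ℝ (Fin n))
    (hν : ‖ν‖ = 1) (hperp : ∀ v ∈ tangentConeAt ℝ M x, (inner ℝ v ν : ℝ) = 0)
    {ε : ℝ} (hε : 0 < ε) (hε1 : ε ≤ 1) :
    ∃ t₀ > 0, ∀ t : ℝ, 0 < t → t ≤ t₀ →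
      (1 - ε) * t ≤ Metric.infDist (x + t • ν) M := by
  have hne : M.Nonempty := ⟨x, hx⟩
  by_contra hcon
  push_neg at hcon
  have hsel : ∀ k : ℕ, ∃ t : ℝ, 0 < t ∧ t ≤ 1/(k+1) ∧
      Metric.infDist (x + t • ν) M < (1-ε)*t := by
    intro k
    obtain ⟨t, ht1, ht2, ht3⟩ := hcon (1/(k+1)) (by positivity)
    exact ⟨t, ht1, ht2, ht3⟩
  choose ts hts1 hts2 hts3 using hsel
  have hp : ∀ k : ℕ, ∃ p ∈ M, Metric.infDist (x + ts k • ν) M = dist (x + ts k • ν) p :=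
    fun k => hM.exists_infDist_eq_dist hne _
  choose p hpM hpeq using hp
  set d : ℕ → EuclideanSpace ℝ (Fin n) := fun k => p k - x with hd_def
  have htν : ∀ k, ‖ts k • ν‖ = ts k := by
    intro k
    rw [norm_smul, hν, mul_one, Real.norm_eq_abs, abs_of_pos (hts1 k)]
  have hdist : ∀ k, ‖d k - ts k • ν‖ < (1-ε) * ts k := by
    intro k
    have h1 := hts3 k
    rw [hpeq k, dist_eq_norm] at h1
    have h2 : x + ts k • ν - p k = -(d k - ts k • ν) := by simp only [hd_def]; abel
    rwa [h2, norm_neg] at h1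
  have hdlow : ∀ k, ε * ts k ≤ ‖d k‖ := by
    intro k
    have h1 : ‖ts k • ν‖ - ‖d k‖ ≤ ‖ts k • ν - d k‖ := norm_sub_norm_le _ _
    have h5 : ‖ts k • ν - d k‖ = ‖d k - ts k • ν‖ := norm_sub_rev _ _
    have h3 := hdist k
    have h2 := htν k
    linarith
  have hdpos : ∀ k, 0 < ‖d k‖ := fun k => lt_of_lt_of_le (mul_pos hε (hts1 k)) (hdlow k)
  have hdup : ∀ k, ‖d k‖ ≤ 2 * ts k := by
    intro k
    have h1 : ‖d k‖ - ‖ts k • ν‖ ≤ ‖d k - ts k • ν‖ := norm_sub_norm_le _ _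
    have h3 := hdist k
    have h2 := htν k
    have h4 : 0 ≤ ε * ts k := (mul_pos hε (hts1 k)).le
    linarith
  have hinner : ∀ k, Real.sqrt ε * ‖d k‖ ≤ (inner ℝ (d k) ν : ℝ) := by
    intro k
    have h3 := hdist k
    have hsq : ‖d k - ts k • ν‖^2 < ((1-ε) * ts k)^2 :=
      pow_lt_pow_left₀ h3 (norm_nonneg _) two_ne_zero
    rw [norm_sub_sq_real, real_inner_smul_right, htν k] at hsq
    have key : ‖d k‖^2 + ε * ts k^2 ≤ 2 * (ts k * inner ℝ (d k) ν) := by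
      nlinarith [mul_nonneg (mul_nonneg hε.le (sub_nonneg.2 hε1)) (sq_nonneg (ts k))]
    have hamgm : 2 * (Real.sqrt ε * ‖d k‖) * ts k ≤ ‖d k‖^2 + ε * ts k^2 := by
      nlinarith [sq_nonneg (‖d k‖ - Real.sqrt ε * ts k), Real.sq_sqrt hε.le,
        Real.sqrt_nonneg ε]
    have hfin := hamgm.trans key
    nlinarith [hts1 k]
  set v : ℕ → EuclideanSpace ℝ (Fin n) := fun k => ‖d k‖⁻¹ • d k with hv_def
  have hvmem : ∀ k, v k ∈ sphere (0 : EuclideanSpace ℝ (Fin n)) 1 := by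
    intro k
    rw [mem_sphere, dist_zero_right, hv_def]
    rw [norm_smul, norm_inv, norm_norm, inv_mul_cancel₀ (hdpos k).ne']
  obtain ⟨V, hVmem, φ, hφ, hVlim⟩ :=
    (isCompact_sphere (0 : EuclideanSpace ℝ (Fin n)) 1).tendsto_subseq hvmem
  have hVtc : V ∈ tangentConeAt ℝ M x := by
    refine mem_tangentConeAt_iff_exists_seq_norm_tendsto_atTop.2
      ⟨fun k => ‖d (φ k)‖⁻¹, fun k => d (φ k), ?_, ?_, ?_⟩
    swap
    · refine Eventually.of_forall (fun k => ?_)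
      have h5 : x + d (φ k) = p (φ k) := by simp [hd_def]
      rw [h5]; exact hpM _
    · have hb : Tendsto (fun k : ℕ => 2 * (1/((k:ℝ)+1))) atTop (𝓝 0) := by
        simpa using tendsto_one_div_add_atTop_nhds_zero_nat.const_mul (2:ℝ)
      have hto0' : Tendsto (fun k => ‖d (φ k)‖) atTop (𝓝 0) := by
        refine squeeze_zero (fun k => norm_nonneg _) (fun k => ?_) hb
        have hcast : ((k:ℝ)+1) ≤ ((φ k:ℝ)+1) := by
          have := hφ.id_le k
          have : (k:ℝ) ≤ (φ k : ℝ) := by exact_mod_cast this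
          linarith
        calc ‖d (φ k)‖ ≤ 2 * ts (φ k) := hdup (φ k)
          _ ≤ 2 * (1/((φ k:ℝ)+1)) := by have := hts2 (φ k); linarith
          _ ≤ 2 * (1/((k:ℝ)+1)) := by gcongr
      have hto0 : Tendsto (fun k => ‖d (φ k)‖) atTop (𝓝[>] 0) :=
        tendsto_nhdsWithin_iff.2 ⟨hto0', Eventually.of_forall (fun k => hdpos (φ k))⟩
      have hinvtop : Tendsto (fun k => (‖d (φ k)‖)⁻¹) atTop atTop :=
        tendsto_inv_nhdsGT_zero.comp hto0
      refine hinvtop.congr (fun k => ?_)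
      exact ((Real.norm_eq_abs _).trans (abs_of_pos (inv_pos.2 (hdpos (φ k))))).symm
    · exact hVlim
  have h0 : (inner ℝ V ν : ℝ) = 0 := hperp V hVtc
  have hlow : Real.sqrt ε ≤ (inner ℝ V ν : ℝ) := by
    have hlim : Tendsto (fun k => (inner ℝ (v (φ k)) ν : ℝ)) atTop (𝓝 (inner ℝ V ν : ℝ)) :=
      hVlim.inner tendsto_const_nhds
    refine ge_of_tendsto hlim (Eventually.of_forall (fun k => ?_))
    have h1 := hinner (φ k)
    have hne0 : ‖d (φ k)‖ ≠ 0 := (hdpos (φ k)).ne'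
    have h2 : Real.sqrt ε = ‖d (φ k)‖⁻¹ * (Real.sqrt ε * ‖d (φ k)‖) := by
      field_simp
    show Real.sqrt ε ≤ (inner ℝ (v (φ k)) ν : ℝ)
    rw [hv_def]
    simp only [real_inner_smul_left]
    rw [h2]
    exact mul_le_mul_of_nonneg_left h1 (inv_nonneg.2 (norm_nonneg _))
  rw [h0] at hlow
  exact absurd hlow (not_le.2 (Real.sqrt_pos.2 hε))

lemma federer_key_eps {n : ℕ} {M : Set (EuclideanSpace ℝ (Fin n))} (hM : IsClosed M)
    {τ : ℝ} (hτ : 0 < τ) (hreach : HasReachGE M τ)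
    (x : EuclideanSpace ℝ (Fin n)) (hx : x ∈ M) (ν : EuclideanSpace ℝ (Fin n))
    (hν : ‖ν‖ = 1) (hperp : ∀ v ∈ tangentConeAt ℝ M x, (inner ℝ v ν : ℝ) = 0)
    (y : EuclideanSpace ℝ (Fin n)) (hy : y ∈ M) {ε : ℝ} (hε : 0 < ε) (hε2 : ε ≤ 1/2) :
    (inner ℝ (y - x) ν : ℝ) ≤ ‖y - x‖^2 / (2*(1-ε)*τ) + τ * Real.sqrt (5*ε) := by
  have hne : M.Nonempty := ⟨x, hx⟩
  obtain ⟨t₀, ht₀, hstep⟩ := federer_tangent_step hM x hx ν hν hperp hε (by linarith)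
  set t := min t₀ (ε*τ) with ht_def
  have ht : 0 < t := lt_min ht₀ (by positivity)
  have htt₀ : t ≤ t₀ := min_le_left _ _
  have htετ : t ≤ ε*τ := min_le_right _ _
  set z₀ := x + t • ν with hz₀
  set d₀ := Metric.infDist z₀ M with hd₀
  have hd₀l : (1-ε)*t ≤ d₀ := hstep t ht htt₀
  have hd₀u : d₀ ≤ t := by
    have h1 : Metric.infDist z₀ M ≤ dist z₀ x := infDist_le_dist_of_mem hx
    have h2 : dist z₀ x = t := by
      rw [hz₀, dist_eq_norm, add_sub_cancel_left, norm_smul, hν, mul_one,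
        Real.norm_eq_abs, abs_of_pos ht]
    linarith
  have hd₀pos : 0 < d₀ := lt_of_lt_of_le (by nlinarith) hd₀l
  set L := (1-ε)*τ - d₀ with hL_def
  have hLpos : 0 ≤ L := by nlinarith
  have hsum : d₀ + L < τ := by
    rw [hL_def]
    nlinarith
  obtain ⟨zb, hzb1, hzb2⟩ := federer_escape hM hne hreach z₀ hd₀pos hLpos hsum
  set ρ := (1-ε)*τ with hρ_def
  have hρpos : 0 < ρ := by nlinarith
  have hρτ : ρ ≤ τ := by nlinarith
  have hzb2' : ρ ≤ Metric.infDist zb M := by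
    have : d₀ + L = ρ := by rw [hL_def]; ring
    linarith
  set ζ := zb - x with hζ_def
  have ha : ρ ≤ ‖ζ‖ := by
    have h1 : Metric.infDist zb M ≤ dist zb x := infDist_le_dist_of_mem hx
    rw [dist_eq_norm] at h1
    linarith
  have hζz₀ : ‖ζ - t • ν‖ ≤ L := by
    have : ζ - t • ν = zb - z₀ := by rw [hζ_def, hz₀]; abel
    rw [this, ← dist_eq_norm]
    exact hzb1
  have hb : ‖ζ‖ ≤ ρ + ε*t := by
    have h1 : ‖ζ‖ ≤ ‖ζ - t • ν‖ + ‖t • ν‖ := by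
      have := norm_add_le (ζ - t • ν) (t • ν)
      simpa using this
    have h2 : ‖t • ν‖ = t := by
      rw [norm_smul, hν, mul_one, Real.norm_eq_abs, abs_of_pos ht]
    have h3 : L = ρ - d₀ := by rw [hL_def, hρ_def]
    nlinarith
  have hd : ρ*(1-ε) ≤ (inner ℝ ζ ν : ℝ) := by
    have hsq : ‖ζ - t • ν‖^2 ≤ L^2 := pow_le_pow_left₀ (norm_nonneg _) hζz₀ 2
    rw [norm_sub_sq_real, real_inner_smul_right] at hsq
    have h2 : ‖t • ν‖ = t := by
      rw [norm_smul, hν, mul_one, Real.norm_eq_abs, abs_of_pos ht]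
    rw [h2] at hsq
    have h3 : L = ρ - d₀ := by rw [hL_def, hρ_def]
    have hsq2 : ρ^2 ≤ ‖ζ‖^2 := pow_le_pow_left₀ hρpos.le ha 2
    -- 2 t ⟪ζ,ν⟫ ≥ ‖ζ‖² + t² − L² ≥ ρ² + t² − (ρ−d₀)² = 2ρd₀ − d₀² + t² ≥ 2ρ(1−ε)t
    have hL2 : L^2 = ρ^2 - 2*ρ*d₀ + d₀^2 := by rw [h3]; ring
    have h5 : 2*ρ*d₀ - d₀^2 + t^2 ≤ 2*(t * inner ℝ ζ ν) := by linarith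
    have h6 : 2*ρ*((1-ε)*t) ≤ 2*ρ*d₀ := by
      have := mul_le_mul_of_nonneg_left hd₀l (by positivity : (0:ℝ) ≤ 2*ρ)
      linarith
    have h7 : d₀^2 ≤ t^2 := pow_le_pow_left₀ hd₀pos.le hd₀u 2
    have h8 : ρ*(1-ε) * (2*t) ≤ inner ℝ ζ ν * (2*t) := by linarith
    exact le_of_mul_le_mul_right h8 (by positivity : (0:ℝ) < 2*t)
  have he : ‖ζ - ρ • ν‖^2 ≤ 5*ε*τ^2 := by
    have hexp : ‖ζ - ρ • ν‖^2 = ‖ζ‖^2 - 2*(ρ * inner ℝ ζ ν) + ρ^2 := by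
      rw [norm_sub_sq_real, real_inner_smul_right, norm_smul, hν, mul_one,
        Real.norm_eq_abs, abs_of_pos hρpos]
    rw [hexp]
    have h1 : ‖ζ‖^2 ≤ (ρ + ε*t)^2 := pow_le_pow_left₀ (norm_nonneg _) hb 2
    have h2 : 2*(ρ * (ρ*(1-ε))) ≤ 2*(ρ * inner ℝ ζ ν) := by
      have := mul_le_mul_of_nonneg_left hd (by positivity : (0:ℝ) ≤ 2*ρ)
      linarith
    have ht_τ : t ≤ τ := htετ.trans (by nlinarith)
    have e1 : ρ*t ≤ τ^2 := by nlinarith [mul_le_mul hρτ ht_τ ht.le hτ.le]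
    have e2 : ε*t^2 ≤ τ^2 := by nlinarith [pow_le_pow_left₀ ht.le ht_τ 2]
    have e3 : ρ^2 ≤ τ^2 := pow_le_pow_left₀ hρpos.le hρτ 2
    calc ‖ζ‖^2 - 2*(ρ * inner ℝ ζ ν) + ρ^2
        ≤ (ρ + ε*t)^2 - 2*(ρ*(ρ*(1-ε))) + ρ^2 := by linarith
      _ = 2*ε*(ρ*t) + ε*(ε*t^2) + 2*ε*ρ^2 := by ring
      _ ≤ 2*ε*τ^2 + ε*τ^2 + 2*ε*τ^2 := by
          have b1 := mul_le_mul_of_nonneg_left e1 (by positivity : (0:ℝ) ≤ 2*ε)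
          have b2 := mul_le_mul_of_nonneg_left e2 hε.le
          have b3 := mul_le_mul_of_nonneg_left e3 (by positivity : (0:ℝ) ≤ 2*ε)
          linarith
      _ = 5*ε*τ^2 := by ring
  have hη : ‖ζ - ρ • ν‖ ≤ τ * Real.sqrt (5*ε) := by
    have h1 : ‖ζ - ρ • ν‖ = Real.sqrt (‖ζ - ρ • ν‖^2) := by
      rw [Real.sqrt_sq (norm_nonneg _)]
    rw [h1]
    have h2 : Real.sqrt (‖ζ - ρ • ν‖^2) ≤ Real.sqrt (5*ε*τ^2) := Real.sqrt_le_sqrt he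
    have h3 : Real.sqrt (5*ε*τ^2) = Real.sqrt (5*ε) * τ := by
      rw [Real.sqrt_mul (by positivity) (τ^2), Real.sqrt_sq hτ.le]
    rw [h3] at h2
    linarith [h2]
  have hf : ρ ≤ ‖(y - x) - ζ‖ := by
    have h1 : (y - x) - ζ = y - zb := by rw [hζ_def]; abel
    rw [h1, ← dist_eq_norm]
    have h2 : Metric.infDist zb M ≤ dist zb y := infDist_le_dist_of_mem hy
    rw [dist_comm] at h2
    linarith
  -- ‖w − ρν‖ ≥ ρ − η
  set w := y - x with hw_def
  set η := ‖ζ - ρ • ν‖ with hη_def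
  have hγ : ρ - η ≤ ‖w - ρ • ν‖ := by
    have h1 : ‖w - ζ‖ ≤ ‖w - ρ • ν‖ + ‖ρ • ν - ζ‖ := by
      have := norm_add_le (w - ρ • ν) (ρ • ν - ζ)
      have h2 : w - ρ • ν + (ρ • ν - ζ) = w - ζ := by abel
      rwa [h2] at this
    have h3 : ‖ρ • ν - ζ‖ = η := by rw [hη_def, norm_sub_rev]
    linarith
  have hγ2 : ρ^2 - 2*ρ*η ≤ ‖w - ρ • ν‖^2 := by
    rcases le_or_gt η ρ with hc | hc
    · have h1 : 0 ≤ ρ - η := by linarith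
      have h2 : (ρ - η)^2 ≤ ‖w - ρ • ν‖^2 := pow_le_pow_left₀ h1 hγ 2
      nlinarith [sq_nonneg η]
    · nlinarith [sq_nonneg (‖w - ρ • ν‖), mul_pos hρpos (hρpos.trans hc)]
  have hexpw : ‖w - ρ • ν‖^2 = ‖w‖^2 - 2*(ρ * inner ℝ w ν) + ρ^2 := by
    rw [norm_sub_sq_real, real_inner_smul_right, norm_smul, hν, mul_one,
      Real.norm_eq_abs, abs_of_pos hρpos]
  have hkey : 2*ρ*(inner ℝ w ν : ℝ) ≤ ‖w‖^2 + 2*ρ*η := by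
    rw [hexpw] at hγ2
    nlinarith
  have hηbound : η ≤ τ * Real.sqrt (5*ε) := hη
  have hfinal : (inner ℝ w ν : ℝ) ≤ ‖w‖^2/(2*ρ) + η := by
    have h1 : (inner ℝ w ν : ℝ) - η ≤ ‖w‖^2/(2*ρ) := by
      rw [le_div_iff₀ (by positivity : (0:ℝ) < 2*ρ)]
      nlinarith
    linarith
  have heq : 2*(1-ε)*τ = 2*ρ := by rw [hρ_def]; ring
  rw [heq]
  linarith

/-- **Federer's tangent bound for sets of positive reach.**
Let `M ⊂ ℝⁿ` be a `C²` submanifold with positive reach `τ > 0` and `x ∈ M`; we encode the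
submanifold structure at `x` by requiring the tangent cone of `M` at `x` to be a linear
subspace `T` (the tangent space `T_x M`).  Then every `y ∈ M` with `‖y - x‖ < τ` satisfies
`d(y, x + T) ≤ ‖y - x‖² / (2τ)`, where `x + T` is the affine tangent plane at `x`. -/
theorem federer_tangent_bound {n : ℕ} (M : Set (EuclideanSpace ℝ (Fin n)))
    (τ : ℝ) (hτ : 0 < τ) (hM : IsClosed M)
    (hreach : HasReachGE M τ)
    (x : EuclideanSpace ℝ (Fin n)) (hx : x ∈ M)
    (T : Submodule ℝ (EuclideanSpace ℝ (Fin n)))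
    (hT : tangentConeAt ℝ M x = (T : Set (EuclideanSpace ℝ (Fin n))))
    (y : EuclideanSpace ℝ (Fin n)) (hy : y ∈ M) (hclose : ‖y - x‖ < τ) :
    Metric.infDist y ((fun v => x + v) '' (T : Set (EuclideanSpace ℝ (Fin n))))
      ≤ ‖y - x‖ ^ 2 / (2 * τ) := by
  set w := y - x with hw_def
  set Pw := ((T.orthogonalProjection w : T) : EuclideanSpace ℝ (Fin n)) with hPw_def
  set u := w - Pw with hu_def
  have hu_perp : u ∈ Tᗮ := Submodule.sub_starProjection_mem_orthogonal (K := T) w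
  have hPw_mem : Pw ∈ T := (T.orthogonalProjection w).2
  have h_le : Metric.infDist y ((fun v => x + v) '' (T : Set (EuclideanSpace ℝ (Fin n))))
      ≤ ‖u‖ := by
    have hmem : x + Pw ∈ (fun v => x + v) '' (T : Set (EuclideanSpace ℝ (Fin n))) :=
      ⟨Pw, hPw_mem, rfl⟩
    have h1 : Metric.infDist y ((fun v => x + v) '' (T : Set (EuclideanSpace ℝ (Fin n))))
        ≤ dist y (x + Pw) := Metric.infDist_le_dist_of_mem hmem
    have h2 : dist y (x + Pw) = ‖u‖ := by
      rw [dist_eq_norm, hu_def, hw_def]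
      congr 1
      abel
    linarith
  rcases eq_or_ne u 0 with h0 | h0
  · rw [h0, norm_zero] at h_le
    refine h_le.trans ?_
    positivity
  · set ν := ‖u‖⁻¹ • u with hν_def
    have hupos : 0 < ‖u‖ := norm_pos_iff.2 h0
    have hν : ‖ν‖ = 1 := by
      rw [hν_def, norm_smul, norm_inv, norm_norm, inv_mul_cancel₀ hupos.ne']
    have hperp : ∀ v ∈ tangentConeAt ℝ M x, (inner ℝ v ν : ℝ) = 0 := by
      intro v hv
      have hvT : v ∈ T := by rw [hT] at hv; exact hv
      have h1 : (inner ℝ v u : ℝ) = 0 := (Submodule.mem_orthogonal T u).1 hu_perp v hvT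
      rw [hν_def, real_inner_smul_right, h1, mul_zero]
    have key : (inner ℝ w ν : ℝ) ≤ ‖w‖^2 / (2*τ) := by
      have hev : ∀ᶠ ε in 𝓝[>] (0:ℝ),
          (inner ℝ w ν : ℝ) ≤ ‖w‖^2 / (2*(1-ε)*τ) + τ * Real.sqrt (5*ε) := by
        filter_upwards [Ioc_mem_nhdsGT_of_mem
          (⟨le_refl (0:ℝ), by norm_num⟩ : (0:ℝ) ∈ Ico (0:ℝ) (1/2))] with ε hε
        exact federer_key_eps hM hτ hreach x hx ν hν hperp y hy hε.1 hε.2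
      have hcont : ContinuousAt
          (fun ε : ℝ => ‖w‖^2 / (2*(1-ε)*τ) + τ * Real.sqrt (5*ε)) 0 := by
        apply ContinuousAt.add
        · apply ContinuousAt.div continuousAt_const
          · fun_prop
          · norm_num
            positivity
        · exact continuousAt_const.mul
            ((Real.continuous_sqrt.continuousAt).comp (by fun_prop))
      have hval : (fun ε : ℝ => ‖w‖^2 / (2*(1-ε)*τ) + τ * Real.sqrt (5*ε)) 0
          = ‖w‖^2 / (2*τ) := by
        norm_num
      have hlim : Tendsto (fun ε : ℝ => ‖w‖^2 / (2*(1-ε)*τ) + τ * Real.sqrt (5*ε))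
          (𝓝[>] (0:ℝ)) (𝓝 (‖w‖^2 / (2*τ))) := by
        rw [← hval]
        exact (hcont.tendsto).mono_left nhdsWithin_le_nhds
      exact ge_of_tendsto hlim hev
    have hwu : (inner ℝ w ν : ℝ) = ‖u‖ := by
      have h1 : (inner ℝ Pw u : ℝ) = 0 := (Submodule.mem_orthogonal T u).1 hu_perp Pw hPw_mem
      have h2 : (inner ℝ w u : ℝ) = ‖u‖^2 := by
        have : w = Pw + u := by rw [hu_def]; abel
        rw [this, inner_add_left, h1, real_inner_self_eq_norm_sq, zero_add]
      rw [hν_def, real_inner_smul_right, h2]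
      field_simp
    rw [hwu] at key
    exact h_le.trans key
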